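/- Let G be a graph with a 2-edge-cut {u1u2, v1v2} separating G into G1 (containing u1, v1) and G2 (containing u2, v2). If every maximum cycle packing of G1' = G1 + u1v1 contains a cycle through the edge u1v1 and every maximum cycle packing of G2' = G2 + u2v2 contains a cycle through u2v2, and cp(G1') = cp(G1) + 1 and cp(G2') = cp(G2) + 1, then cp(G) ≥ cp(G1) + cp(G2) + 1. -/

import Mathlib

/- A multigraph on vertex type `V` is represented by its multiset of edges,
   each edge being an unordered pair (`Sym2 V`); loops are `s(v, v)` and
   parallel edges are repeated elements of the multiset. -/

open Classical

namespace MG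

variable {V : Type*}

/-- Degree of a vertex (a loop counts twice). -/
noncomputable def deg (G : Multiset (Sym2 V)) (v : V) : ℕ :=
  (G.map fun e => if e = s(v, v) then 2 else if v ∈ e then 1 else 0).sum

/-- The vertices touched by some edge. -/
def support (G : Multiset (Sym2 V)) : Set V := {v | ∃ e ∈ G, v ∈ e}

/-- Adjacency. -/
def Adj (G : Multiset (Sym2 V)) (a b : V) : Prop := s(a, b) ∈ G

/-- Reachability. -/
def Reach (G : Multiset (Sym2 V)) : V → V → Prop := Relation.ReflTransGen (Adj G)

/-- Connectedness (of the non-isolated vertices). -/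
def Conn (G : Multiset (Sym2 V)) : Prop :=
  (support G).Nonempty ∧ ∀ a ∈ support G, ∀ b ∈ support G, Reach G a b

/-- A multigraph is a cycle iff it is nonempty, connected and 2-regular. -/
def IsCycle (C : Multiset (Sym2 V)) : Prop :=
  C ≠ 0 ∧ Conn C ∧ ∀ v ∈ support C, deg C v = 2

/-- A forest contains no cycle. -/
def IsForest (G : Multiset (Sym2 V)) : Prop := ∀ C ≤ G, ¬ IsCycle C

/-- Delete a set of vertices (removing all incident edges). -/
noncomputable def deleteVerts (G : Multiset (Sym2 V)) (S : Set V) : Multiset (Sym2 V) :=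
  G.filter fun e => ∀ v ∈ e, v ∉ S

/-- Minimum size of a feedback vertex set. -/
noncomputable def fvs (G : Multiset (Sym2 V)) : ℕ :=
  sInf {n | ∃ S : Finset V, S.card = n ∧ IsForest (deleteVerts G ↑S)}

/-- `f` is a packing of `n` pairwise vertex-disjoint cycles in `G`. -/
def IsCyclePackingOn (G : Multiset (Sym2 V)) {n : ℕ} (f : Fin n → Multiset (Sym2 V)) : Prop :=
  (∀ i, f i ≤ G ∧ IsCycle (f i)) ∧
    ∀ i j, i ≠ j → Disjoint (support (f i)) (support (f j))

/-- Maximum size of a cycle packing. -/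
noncomputable def cp (G : Multiset (Sym2 V)) : ℕ :=
  sSup {n | ∃ f : Fin n → Multiset (Sym2 V), IsCyclePackingOn G f}

/-- `H` is a minor of the multigraph `G` (branch-set definition). -/
def HasMinor {W : Type*} (G : Multiset (Sym2 V)) (H : SimpleGraph W) : Prop :=
  ∃ B : W → Set V, (∀ w, (B w).Nonempty) ∧
    (∀ w w', w ≠ w' → Disjoint (B w) (B w')) ∧
    (∀ w, ∀ a ∈ B w, ∀ b ∈ B w,
      Relation.ReflTransGen (fun x y => Adj G x y ∧ x ∈ B w ∧ y ∈ B w) a b) ∧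
    (∀ w w', H.Adj w w' → ∃ a ∈ B w, ∃ b ∈ B w', Adj G a b)

/-- Planarity, via Wagner's characterization: no `K₅` minor and no `K₃,₃` minor. -/
def Planar (G : Multiset (Sym2 V)) : Prop :=
  ¬ HasMinor G (SimpleGraph.completeGraph (Fin 5)) ∧
    ¬ HasMinor G (completeBipartiteGraph (Fin 3) (Fin 3))

/-- All degrees are at most 3. -/
def Subcubic (G : Multiset (Sym2 V)) : Prop := ∀ v, deg G v ≤ 3

/-- `H` is a connected component of `M`. -/
def IsComponent (M H : Multiset (Sym2 V)) : Prop :=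
  H ≤ M ∧ Conn H ∧ ∀ e ∈ M - H, ∀ v ∈ e, v ∉ support H

-- weight of an edge at a vertex
noncomputable def wt (e : Sym2 V) (v : V) : ℕ :=
  if e = s(v, v) then 2 else if v ∈ e then 1 else 0

lemma deg_eq (G : Multiset (Sym2 V)) (v : V) : deg G v = (G.map fun e => wt e v).sum := rfl

lemma deg_cons (e : Sym2 V) (G : Multiset (Sym2 V)) (v : V) :
    deg (e ::ₘ G) v = wt e v + deg G v := by
  simp [deg_eq, Multiset.map_cons]

lemma deg_add (A B : Multiset (Sym2 V)) (v : V) : deg (A + B) v = deg A v + deg B v := by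
  simp [deg_eq]

lemma deg_erase {e : Sym2 V} {G : Multiset (Sym2 V)} (h : e ∈ G) (v : V) :
    deg G v = wt e v + deg (G.erase e) v := by
  conv_lhs => rw [← Multiset.cons_erase h]
  rw [deg_cons]

lemma wt_loop (x v : V) : wt s(x, x) v = if v = x then 2 else 0 := by
  unfold wt
  by_cases h : v = x
  · subst h; simp
  · rw [if_neg (by rw [Sym2.eq_iff]; tauto), if_neg (by simp [Sym2.mem_iff, h]), if_neg h]

lemma wt_ne (x y v : V) (hxy : x ≠ y) :
    wt s(x, y) v = (if v = x then 1 else 0) + (if v = y then 1 else 0) := by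
  unfold wt
  rw [if_neg (by rw [Sym2.eq_iff]; rintro (⟨rfl, rfl⟩ | ⟨rfl, rfl⟩) <;> exact hxy rfl)]
  by_cases hx : v = x
  · subst hx; simp [Sym2.mem_iff, hxy]
  · by_cases hy : v = y
    · subst hy; simp [Sym2.mem_iff, hx]
    · simp [Sym2.mem_iff, hx, hy]

lemma mem_support_iff {G : Multiset (Sym2 V)} {v : V} :
    v ∈ support G ↔ ∃ e ∈ G, v ∈ e := Iff.rfl

lemma support_mono {A B : Multiset (Sym2 V)} (h : A ≤ B) : support A ⊆ support B := by
  rintro v ⟨e, he, hv⟩; exact ⟨e, Multiset.mem_of_le h he, hv⟩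

lemma mem_support_of_mem {G : Multiset (Sym2 V)} {e : Sym2 V} {v : V}
    (he : e ∈ G) (hv : v ∈ e) : v ∈ support G := ⟨e, he, hv⟩

lemma not_mem_support_deg {G : Multiset (Sym2 V)} {v : V} (h : v ∉ support G) :
    deg G v = 0 := by
  rw [deg_eq]
  rw [Multiset.sum_eq_zero]
  intro n hn
  rw [Multiset.mem_map] at hn
  obtain ⟨e, he, rfl⟩ := hn
  unfold wt
  rw [if_neg, if_neg]
  · intro hv; exact h ⟨e, he, hv⟩
  · rintro rfl; exact h ⟨_, he, by simp⟩

lemma mem_support_of_deg_pos {G : Multiset (Sym2 V)} {v : V} (h : 0 < deg G v) :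
    v ∈ support G := by
  by_contra hc; rw [not_mem_support_deg hc] at h; omega

lemma adj_symm {G : Multiset (Sym2 V)} : Symmetric (Adj G) := by
  intro a b h; unfold Adj at *; rwa [Sym2.eq_swap]

lemma reach_symm {G : Multiset (Sym2 V)} {a b : V} (h : Reach G a b) : Reach G b a :=
  by haveI : Std.Symm (Adj G) := ⟨fun a b h => adj_symm h⟩
     exact Std.Symm.symm (r := Relation.ReflTransGen (Adj G)) a b h

lemma reach_mono {A B : Multiset (Sym2 V)} (h : A ≤ B) {a b : V} (hr : Reach A a b) :
    Reach B a b :=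
  Relation.ReflTransGen.mono (p := Adj B) (fun _ _ hx => Multiset.mem_of_le h hx) a b hr


noncomputable def edgeVerts (e : Sym2 V) : Finset V := {e.out.1, e.out.2}

lemma mem_edgeVerts {e : Sym2 V} {v : V} : v ∈ edgeVerts e ↔ v ∈ e := by
  unfold edgeVerts
  rw [Finset.mem_insert, Finset.mem_singleton]
  conv_rhs => rw [← e.out_eq]
  rw [Sym2.mem_iff]

/-- Finset version of the support. -/
noncomputable def suppF (G : Multiset (Sym2 V)) : Finset V :=
  G.toFinset.biUnion edgeVerts

lemma mem_suppF {G : Multiset (Sym2 V)} {v : V} : v ∈ suppF G ↔ v ∈ support G := by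
  unfold suppF
  rw [Finset.mem_biUnion]
  constructor
  · rintro ⟨e, he, hv⟩; exact ⟨e, Multiset.mem_toFinset.1 he, mem_edgeVerts.1 hv⟩
  · rintro ⟨e, he, hv⟩; exact ⟨e, Multiset.mem_toFinset.2 he, mem_edgeVerts.2 hv⟩

/-- Handshake: if a Finset is closed under adjacency, the degree sum over it is even. -/
lemma even_sum_deg (P : Multiset (Sym2 V)) (S : Finset V)
    (hcl : ∀ x y : V, s(x, y) ∈ P → (x ∈ S ↔ y ∈ S)) :
    Even (∑ v ∈ S, deg P v) := by
  induction P using Multiset.induction with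
  | empty => simp [deg_eq]
  | cons e P ih =>
    have hsum : (∑ v ∈ S, deg (e ::ₘ P) v) = (∑ v ∈ S, wt e v) + ∑ v ∈ S, deg P v := by
      rw [← Finset.sum_add_distrib]; exact Finset.sum_congr rfl fun v _ => deg_cons e P v
    rw [hsum]
    refine Even.add ?_ (ih fun x y hxy => hcl x y (Multiset.mem_cons_of_mem hxy))
    induction e using Sym2.inductionOn with
    | hf x y =>
      by_cases hxy : x = y
      · subst hxy
        have : (∑ v ∈ S, wt s(x, x) v) = if x ∈ S then 2 else 0 := by
          rw [Finset.sum_congr rfl fun v _ => wt_loop x v]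
          exact Finset.sum_ite_eq' S x (fun _ => 2)
        rw [this]
        by_cases hx2 : x ∈ S <;> simp [hx2]
      · have : (∑ v ∈ S, wt s(x, y) v)
            = (if x ∈ S then 1 else 0) + (if y ∈ S then 1 else 0) := by
          rw [Finset.sum_congr rfl fun v _ => wt_ne x y v hxy, Finset.sum_add_distrib,
            Finset.sum_ite_eq' S x (fun _ => 1), Finset.sum_ite_eq' S y (fun _ => 1)]
        rw [this]
        have hiff := hcl x y (Multiset.mem_cons_self _ _)
        by_cases hx : x ∈ S
        · rw [if_pos hx, if_pos (hiff.1 hx)]; decide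
        · rw [if_neg hx, if_neg (fun hy => hx (hiff.2 hy))]; simp

/-- Any vertex reachable in `C` is reachable from `a` or `b` in `C` minus the edge `ab`. -/
lemma reach_erase (C : Multiset (Sym2 V)) (a b x : V) (hx : Reach C a x) :
    Reach (C.erase s(a, b)) a x ∨ Reach (C.erase s(a, b)) b x := by
  induction hx with
  | refl => exact Or.inl Relation.ReflTransGen.refl
  | tail hyz hadj ih =>
    rename_i c d
    by_cases he : s(c, d) = s(a, b)
    · rw [Sym2.eq_iff] at he
      rcases he with ⟨rfl, rfl⟩ | ⟨rfl, rfl⟩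
      · exact Or.inr Relation.ReflTransGen.refl
      · exact Or.inl Relation.ReflTransGen.refl
    · have hmem : s(c, d) ∈ C.erase s(a, b) := (Multiset.mem_erase_of_ne he).2 hadj
      rcases ih with h | h
      · exact Or.inl (h.tail hmem)
      · exact Or.inr (h.tail hmem)

/-- Deleting a non-loop edge from a cycle keeps its endpoints connected. -/
lemma reach_of_erase {C : Multiset (Sym2 V)} (hC : IsCycle C) {a b : V}
    (he : s(a, b) ∈ C) (hab : a ≠ b) : Reach (C.erase s(a, b)) a b := by
  by_contra hnr
  set P := C.erase s(a, b) with hP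
  have ha_supp : a ∈ support C := mem_support_of_mem he (by simp)
  have hb_supp : b ∈ support C := mem_support_of_mem he (by simp)
  have hdegC : ∀ v ∈ support C, deg C v = 2 := hC.2.2
  have hwa : wt s(a, b) a = 1 := by rw [wt_ne a b a hab]; simp [hab]
  have hwb : wt s(a, b) b = 1 := by rw [wt_ne a b b hab]; simp [Ne.symm hab]
  have hdegPa : deg P a = 1 := by
    rw [hP]
    have := deg_erase he a; rw [hdegC a ha_supp, hwa] at this; omega
  have ha_in : a ∈ support P := mem_support_of_deg_pos (hdegPa ▸ Nat.one_pos)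
  -- the reachability class of a in P, as a Finset
  set S : Finset V := (suppF P).filter (fun v => Reach P a v) with hS
  have haS : a ∈ S := Finset.mem_filter.2 ⟨mem_suppF.2 ha_in, Relation.ReflTransGen.refl⟩
  have hbS : b ∉ S := fun h => hnr (Finset.mem_filter.1 h).2
  have hcl : ∀ x y : V, s(x, y) ∈ P → (x ∈ S ↔ y ∈ S) := by
    intro x y hxy
    have h1 : ∀ c d : V, s(c, d) ∈ P → c ∈ S → d ∈ S := by
      intro c d hcd hc
      have := (Finset.mem_filter.1 hc).2
      exact Finset.mem_filter.2 ⟨mem_suppF.2 (mem_support_of_mem hcd (by simp)),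
        this.tail hcd⟩
    exact ⟨h1 x y hxy, h1 y x (by rwa [Sym2.eq_swap])⟩
  have heven := even_sum_deg P S hcl
  -- but the sum is odd
  have h2 : ∀ v ∈ S.erase a, deg P v = 2 := by
    intro v hv
    rw [hP]
    have hvS := Finset.mem_erase.1 hv
    have hvsupp : v ∈ support P := mem_suppF.1 (Finset.mem_filter.1 hvS.2).1
    have hvC : v ∈ support C := support_mono (Multiset.erase_le _ _) hvsupp
    have hvb : v ≠ b := fun h => hbS (h ▸ hvS.2)
    have hw : wt s(a, b) v = 0 := by
      rw [wt_ne a b v hab, if_neg hvS.1, if_neg hvb]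
    have := deg_erase he v
    rw [hdegC v hvC, hw] at this
    omega
  have hsum2 : (∑ v ∈ S.erase a, deg P v) = (S.erase a).card * 2 :=
    Finset.sum_const_nat h2
  have hodd : (∑ v ∈ S, deg P v) = 1 + (S.erase a).card * 2 := by
    rw [← Finset.add_sum_erase S _ haS, hdegPa, hsum2]
  rw [hodd] at heven
  rcases heven with ⟨k, hk⟩
  omega


/-- A cycle containing a loop is just that loop. -/
lemma cycle_loop {C : Multiset (Sym2 V)} (hC : IsCycle C) {a : V} (h : s(a, a) ∈ C) :
    C = {s(a, a)} := by
  have ha : a ∈ support C := mem_support_of_mem h (by simp)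
  have hdeg : deg C a = 2 := hC.2.2 a ha
  have hclosed : ∀ y, Adj C a y → y = a := by
    intro y hy
    by_contra hne
    have h1 : s(a, y) ≠ s(a, a) := by
      rw [Ne, Sym2.eq_iff]
      rintro (⟨-, h'⟩ | ⟨-, h'⟩) <;> exact hne h'
    have h2 : s(a, y) ∈ C.erase s(a, a) := (Multiset.mem_erase_of_ne h1).2 hy
    have h3 := deg_erase h a
    have h4 := deg_erase h2 a
    have hwl : wt s(a, a) a = 2 := by rw [wt_loop]; simp
    have hwy : wt s(a, y) a = 1 := by
      rw [wt_ne a y a (Ne.symm hne)]; simp [Ne.symm hne]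
    omega
  have hreach : ∀ x, Reach C a x → x = a := by
    intro x hx
    induction hx with
    | refl => rfl
    | tail _ hadj ih => exact hclosed _ (ih ▸ hadj)
  have hsupp : ∀ x ∈ support C, x = a := fun x hx => hreach x (hC.2.1.2 a ha x hx)
  have hall : ∀ e ∈ C, e = s(a, a) := by
    intro e he
    induction e using Sym2.inductionOn with
    | hf x y =>
      rw [hsupp x (mem_support_of_mem he (by simp)),
        hsupp y (mem_support_of_mem he (by simp))]
  have hrep : C = Multiset.replicate (Multiset.card C) s(a, a) :=
    (Multiset.eq_replicate_card).2 hall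
  have hdeg2 : deg C a = Multiset.card C * 2 := by
    rw [deg_eq, hrep, Multiset.map_replicate, Multiset.sum_replicate,
      Multiset.card_replicate, smul_eq_mul]
    congr 1
    rw [wt_loop]; simp
  have hcard : Multiset.card C = 1 := by omega
  rw [hrep, hcard]
  rfl

section Combine

variable {C1 C2 : Multiset (Sym2 V)} {u1 v1 u2 v2 : V}

lemma combine_deg_aux (h1 : IsCycle C1) (he1 : s(u1, v1) ∈ C1) (he2 : s(u2, v2) ∈ C2)
    (hd : Disjoint (support C1) (support C2)) {v : V} (hv : v ∈ support C1) :
    deg (s(u1, u2) ::ₘ s(v1, v2) ::ₘ (C1.erase s(u1, v1) + C2.erase s(u2, v2))) v = 2 := by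
  have hu1 : u1 ∈ support C1 := mem_support_of_mem he1 (by simp)
  have hv1 : v1 ∈ support C1 := mem_support_of_mem he1 (by simp)
  have hu2 : u2 ∈ support C2 := mem_support_of_mem he2 (by simp)
  have hv2 : v2 ∈ support C2 := mem_support_of_mem he2 (by simp)
  have hvn2 : v ∉ support C2 := fun h => Set.disjoint_left.1 hd hv h
  have hvu2 : v ≠ u2 := fun h => hvn2 (h ▸ hu2)
  have hvv2 : v ≠ v2 := fun h => hvn2 (h ▸ hv2)
  have hu1u2 : u1 ≠ u2 := fun h => Set.disjoint_left.1 hd hu1 (h ▸ hu2)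
  have hv1v2 : v1 ≠ v2 := fun h => Set.disjoint_left.1 hd hv1 (h ▸ hv2)
  have hdegP2 : deg (C2.erase s(u2, v2)) v = 0 :=
    not_mem_support_deg fun h => hvn2 (support_mono (Multiset.erase_le _ _) h)
  have hw1 : wt s(u1, u2) v = if v = u1 then 1 else 0 := by
    rw [wt_ne u1 u2 v hu1u2, if_neg hvu2]; omega
  have hw2 : wt s(v1, v2) v = if v = v1 then 1 else 0 := by
    rw [wt_ne v1 v2 v hv1v2, if_neg hvv2]; omega
  rw [deg_cons, deg_cons, deg_add, hdegP2, hw1, hw2]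
  have hdC1 : deg C1 v = 2 := h1.2.2 v hv
  have hsplit := deg_erase he1 v
  by_cases hloop : u1 = v1
  · subst hloop
    have hCeq : C1 = {s(u1, u1)} := cycle_loop h1 he1
    have hvu1 : v = u1 := by
      rw [hCeq] at hv
      obtain ⟨e, he, hve⟩ := hv
      rw [Multiset.mem_singleton] at he
      subst he
      rcases Sym2.mem_iff.1 hve with h | h <;> exact h
    have : ({s(u1, u1)} : Multiset (Sym2 V)).erase s(u1, u1) = 0 := by simp
    rw [hCeq, this, if_pos hvu1]
    simp [deg_eq]
  · have hwm : wt s(u1, v1) v = (if v = u1 then 1 else 0) + (if v = v1 then 1 else 0) :=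
      wt_ne u1 v1 v hloop
    rw [hdC1, hwm] at hsplit
    split_ifs at hsplit ⊢ <;> omega

lemma combine_swap :
    s(u2, u1) ::ₘ s(v2, v1) ::ₘ (C2.erase s(u2, v2) + C1.erase s(u1, v1))
      = s(u1, u2) ::ₘ s(v1, v2) ::ₘ (C1.erase s(u1, v1) + C2.erase s(u2, v2)) := by
  rw [show s(u2, u1) = s(u1, u2) from Sym2.eq_swap,
    show s(v2, v1) = s(v1, v2) from Sym2.eq_swap,
    add_comm (C2.erase s(u2, v2)) (C1.erase s(u1, v1))]

lemma combine_cycle (h1 : IsCycle C1) (h2 : IsCycle C2)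
    (he1 : s(u1, v1) ∈ C1) (he2 : s(u2, v2) ∈ C2)
    (hd : Disjoint (support C1) (support C2)) :
    IsCycle (s(u1, u2) ::ₘ s(v1, v2) ::ₘ (C1.erase s(u1, v1) + C2.erase s(u2, v2))) := by
  set P1 := C1.erase s(u1, v1) with hP1
  set P2 := C2.erase s(u2, v2) with hP2
  set D := s(u1, u2) ::ₘ s(v1, v2) ::ₘ (P1 + P2) with hD
  have hu1 : u1 ∈ support C1 := mem_support_of_mem he1 (by simp)
  have hv1 : v1 ∈ support C1 := mem_support_of_mem he1 (by simp)
  have hu2 : u2 ∈ support C2 := mem_support_of_mem he2 (by simp)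
  have hv2 : v2 ∈ support C2 := mem_support_of_mem he2 (by simp)
  have hP1D : P1 ≤ D := le_trans (Multiset.le_add_right _ _)
    (le_trans (Multiset.le_cons_self _ _) (Multiset.le_cons_self _ _))
  have hP2D : P2 ≤ D := le_trans (Multiset.le_add_left _ _)
    (le_trans (Multiset.le_cons_self _ _) (Multiset.le_cons_self _ _))
  have hsuppD : support D ⊆ support C1 ∪ support C2 := by
    rintro v ⟨e, he, hve⟩
    rw [hD, Multiset.mem_cons, Multiset.mem_cons, Multiset.mem_add] at he
    rcases he with rfl | rfl | he | he
    · rcases Sym2.mem_iff.1 hve with rfl | rfl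
      · exact Or.inl hu1
      · exact Or.inr hu2
    · rcases Sym2.mem_iff.1 hve with rfl | rfl
      · exact Or.inl hv1
      · exact Or.inr hv2
    · exact Or.inl (support_mono (Multiset.erase_le _ _) ⟨e, he, hve⟩)
    · exact Or.inr (support_mono (Multiset.erase_le _ _) ⟨e, he, hve⟩)
  -- reachability from u1
  have hDu1u2 : Reach D u1 u2 :=
    Relation.ReflTransGen.single (Multiset.mem_cons_self _ _)
  have hDv1v2 : Reach D v1 v2 :=
    Relation.ReflTransGen.single (Multiset.mem_cons_of_mem (Multiset.mem_cons_self _ _))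
  have hDu1v1 : Reach D u1 v1 := by
    by_cases h : u1 = v1
    · rw [h]
      exact Relation.ReflTransGen.refl
    · exact reach_mono hP1D (reach_of_erase h1 he1 h)
  have hDu2v2 : Reach D u2 v2 := by
    by_cases h : u2 = v2
    · rw [h]
      exact Relation.ReflTransGen.refl
    · exact reach_mono hP2D (reach_of_erase h2 he2 h)
  have hside1 : ∀ x ∈ support C1, Reach D u1 x := by
    intro x hx
    have hr : Reach C1 u1 x := h1.2.1.2 u1 hu1 x hx
    rcases reach_erase C1 u1 v1 x hr with h | h
    · exact reach_mono hP1D h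
    · exact hDu1v1.trans (reach_mono hP1D h)
  have hside2 : ∀ x ∈ support C2, Reach D u2 x := by
    intro x hx
    have hr : Reach C2 u2 x := h2.2.1.2 u2 hu2 x hx
    rcases reach_erase C2 u2 v2 x hr with h | h
    · exact reach_mono hP2D h
    · exact hDu2v2.trans (reach_mono hP2D h)
  have hall : ∀ x ∈ support D, Reach D u1 x := by
    intro x hx
    rcases hsuppD hx with h | h
    · exact hside1 x h
    · exact hDu1u2.trans (hside2 x h)
  have hu1D : u1 ∈ support D := mem_support_of_mem (Multiset.mem_cons_self _ _) (by simp)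
  refine ⟨by rw [hD]; exact Multiset.cons_ne_zero, ⟨⟨u1, hu1D⟩, ?_⟩, ?_⟩
  · intro a ha b hb
    exact (reach_symm (hall a ha)).trans (hall b hb)
  · intro v hvD
    rcases hsuppD hvD with h | h
    · exact combine_deg_aux h1 he1 he2 hd h
    · rw [hD, ← combine_swap]
      exact combine_deg_aux h2 he2 he1 hd.symm h

end Combine

section CP

variable {G H : Multiset (Sym2 V)}

lemma packing_zero (G : Multiset (Sym2 V)) :
    IsCyclePackingOn G (fun _ : Fin 0 => (0 : Multiset (Sym2 V))) :=
  ⟨fun i => i.elim0, fun i => i.elim0⟩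

lemma cpSet_bddAbove (G : Multiset (Sym2 V)) :
    BddAbove {n | ∃ f : Fin n → Multiset (Sym2 V), IsCyclePackingOn G f} := by
  refine ⟨G.toFinset.card, ?_⟩
  rintro n ⟨f, hf⟩
  choose e he using fun i => Multiset.exists_mem_of_ne_zero (hf.1 i).2.1
  have hinj : Set.InjOn e (Finset.univ : Finset (Fin n)) := by
    intro i _ j _ hij
    by_contra hne
    have hv1 : (e i).out.1 ∈ support (f i) :=
      mem_support_of_mem (he i) (Sym2.out_fst_mem _)
    have hv2 : (e i).out.1 ∈ support (f j) :=
      mem_support_of_mem (hij ▸ he j) (Sym2.out_fst_mem _)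
    exact Set.disjoint_left.1 (hf.2 i j hne) hv1 hv2
  have := Finset.card_le_card_of_injOn e
    (fun i _ => Multiset.mem_toFinset.2 (Multiset.mem_of_le (hf.1 i).1 (he i))) hinj
  simpa using this

lemma le_cp {n : ℕ} (f : Fin n → Multiset (Sym2 V)) (hf : IsCyclePackingOn G f) :
    n ≤ cp G :=
  le_csSup (cpSet_bddAbove G) ⟨f, hf⟩

lemma exists_max_packing (G : Multiset (Sym2 V)) :
    ∃ f : Fin (cp G) → Multiset (Sym2 V), IsCyclePackingOn G f := by
  have h0 : (0 : ℕ) ∈ {n | ∃ f : Fin n → Multiset (Sym2 V), IsCyclePackingOn G f} :=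
    ⟨fun _ => 0, packing_zero G⟩
  exact Nat.sSup_mem ⟨0, h0⟩ (cpSet_bddAbove G)

lemma packing_comp {m n : ℕ} {f : Fin m → Multiset (Sym2 V)} (hf : IsCyclePackingOn G f)
    {g : Fin n → Fin m} (hg : Function.Injective g) : IsCyclePackingOn G (f ∘ g) :=
  ⟨fun i => hf.1 _, fun i j hij => hf.2 _ _ fun h => hij (hg h)⟩

lemma packing_mono {n : ℕ} {f : Fin n → Multiset (Sym2 V)} (hGH : G ≤ H)
    (hf : IsCyclePackingOn G f) : IsCyclePackingOn H f :=
  ⟨fun i => ⟨le_trans (hf.1 i).1 hGH, (hf.1 i).2⟩, hf.2⟩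

lemma packing_append {m n : ℕ} {A : Fin m → Multiset (Sym2 V)} {B : Fin n → Multiset (Sym2 V)}
    (hA : IsCyclePackingOn G A) (hB : IsCyclePackingOn G B)
    (hAB : ∀ i j, Disjoint (support (A i)) (support (B j))) :
    IsCyclePackingOn G (Fin.append A B) := by
  constructor
  · intro i
    induction i using Fin.addCases with
    | left i => rw [Fin.append_left]; exact hA.1 i
    | right i => rw [Fin.append_right]; exact hB.1 i
  · intro i j hij
    induction i using Fin.addCases with
    | left i =>
      induction j using Fin.addCases with
      | left j =>
        rw [Fin.append_left, Fin.append_left]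
        exact hA.2 i j fun h => hij (h ▸ rfl)
      | right j =>
        rw [Fin.append_left, Fin.append_right]
        exact hAB i j
    | right i =>
      induction j using Fin.addCases with
      | left j =>
        rw [Fin.append_right, Fin.append_left]
        exact (hAB j i).symm
      | right j =>
        rw [Fin.append_right, Fin.append_right]
        exact hB.2 i j fun h => hij (h ▸ rfl)

lemma packing_single {C : Multiset (Sym2 V)} (h1 : C ≤ G) (h2 : IsCycle C) :
    IsCyclePackingOn G (fun _ : Fin 1 => C) :=
  ⟨fun _ => ⟨h1, h2⟩, fun i j hij => absurd (Subsingleton.elim i j) hij⟩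

lemma le_of_le_cons_of_not_mem {D : Multiset (Sym2 V)} {e : Sym2 V}
    (hD : D ≤ e ::ₘ H) (he : e ∉ D) : D ≤ H := by
  rw [Multiset.le_iff_count] at hD ⊢
  intro a
  have h1 := hD a
  rw [Multiset.count_cons] at h1
  by_cases h : a = e
  · subst h
    rw [Multiset.count_eq_zero.2 he]
    omega
  · simpa [h] using h1

end CP

lemma combine_supp {C1 C2 : Multiset (Sym2 V)} {u1 v1 u2 v2 : V}
    (he1 : s(u1, v1) ∈ C1) (he2 : s(u2, v2) ∈ C2) :
    support (s(u1, u2) ::ₘ s(v1, v2) ::ₘ (C1.erase s(u1, v1) + C2.erase s(u2, v2)))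
      ⊆ support C1 ∪ support C2 := by
  rintro v ⟨e, he, hve⟩
  rw [Multiset.mem_cons, Multiset.mem_cons, Multiset.mem_add] at he
  rcases he with rfl | rfl | he | he
  · rcases Sym2.mem_iff.1 hve with rfl | rfl
    · exact Or.inl (mem_support_of_mem he1 (by simp))
    · exact Or.inr (mem_support_of_mem he2 (by simp))
  · rcases Sym2.mem_iff.1 hve with rfl | rfl
    · exact Or.inl (mem_support_of_mem he1 (by simp))
    · exact Or.inr (mem_support_of_mem he2 (by simp))
  · exact Or.inl (support_mono (Multiset.erase_le _ _) ⟨e, he, hve⟩)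
  · exact Or.inr (support_mono (Multiset.erase_le _ _) ⟨e, he, hve⟩)

end MG

/-- For a 2-edge-cut `{u₁u₂, v₁v₂}` separating `G` into `G1` and `G2`, if every
maximum cycle packing of `G1' = G1 + u₁v₁` uses the edge `u₁v₁`, every maximum
cycle packing of `G2' = G2 + u₂v₂` uses the edge `u₂v₂`, and
`cp G1' = cp G1 + 1` and `cp G2' = cp G2 + 1`, then `cp G ≥ cp G1 + cp G2 + 1`. -/
theorem cp_two_edge_cut {V : Type*} (G G1 G2 : Multiset (Sym2 V)) (u1 v1 u2 v2 : V)
    (hG : G = s(u1, u2) ::ₘ s(v1, v2) ::ₘ (G1 + G2))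
    (hdisj : Disjoint (MG.support G1) (MG.support G2))
    (hc1 : MG.Conn G1) (hc2 : MG.Conn G2)
    (hu1 : u1 ∈ MG.support G1) (hv1 : v1 ∈ MG.support G1)
    (hu2 : u2 ∈ MG.support G2) (hv2 : v2 ∈ MG.support G2)
    (hmax1 : ∀ f : Fin (MG.cp (s(u1, v1) ::ₘ G1)) → Multiset (Sym2 V),
      MG.IsCyclePackingOn (s(u1, v1) ::ₘ G1) f → ∃ i, s(u1, v1) ∈ f i)
    (hmax2 : ∀ f : Fin (MG.cp (s(u2, v2) ::ₘ G2)) → Multiset (Sym2 V),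
      MG.IsCyclePackingOn (s(u2, v2) ::ₘ G2) f → ∃ i, s(u2, v2) ∈ f i)
    (hcp1 : MG.cp (s(u1, v1) ::ₘ G1) = MG.cp G1 + 1)
    (hcp2 : MG.cp (s(u2, v2) ::ₘ G2) = MG.cp G2 + 1) :
    MG.cp G1 + MG.cp G2 + 1 ≤ MG.cp G := by
  classical
  open MG in
  set n1 := MG.cp G1 with hn1
  set n2 := MG.cp G2 with hn2
  obtain ⟨f1, hf1⟩ := MG.exists_max_packing (s(u1, v1) ::ₘ G1)
  obtain ⟨i1, he1⟩ := hmax1 f1 hf1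
  obtain ⟨f2, hf2⟩ := MG.exists_max_packing (s(u2, v2) ::ₘ G2)
  obtain ⟨i2, he2⟩ := hmax2 f2 hf2
  -- transport to Fin (n1+1), Fin (n2+1)
  set f1' : Fin (n1 + 1) → Multiset (Sym2 V) := f1 ∘ Fin.cast hcp1.symm with hf1'def
  set f2' : Fin (n2 + 1) → Multiset (Sym2 V) := f2 ∘ Fin.cast hcp2.symm with hf2'def
  have hf1' : MG.IsCyclePackingOn (s(u1, v1) ::ₘ G1) f1' :=
    MG.packing_comp hf1 (Fin.cast_injective _)
  have hf2' : MG.IsCyclePackingOn (s(u2, v2) ::ₘ G2) f2' :=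
    MG.packing_comp hf2 (Fin.cast_injective _)
  set i1' : Fin (n1 + 1) := Fin.cast hcp1 i1 with hi1'def
  set i2' : Fin (n2 + 1) := Fin.cast hcp2 i2 with hi2'def
  have heq1 : f1' i1' = f1 i1 := by
    simp only [hf1'def, Function.comp_apply, hi1'def]
    congr 1
  have heq2 : f2' i2' = f2 i2 := by
    simp only [hf2'def, Function.comp_apply, hi2'def]
    congr 1
  set C1 : Multiset (Sym2 V) := f1' i1' with hC1def
  set C2 : Multiset (Sym2 V) := f2' i2' with hC2def
  have he1' : s(u1, v1) ∈ C1 := by rw [heq1]; exact he1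
  have he2' : s(u2, v2) ∈ C2 := by rw [heq2]; exact he2
  have hC1cyc : MG.IsCycle C1 := (hf1'.1 i1').2
  have hC2cyc : MG.IsCycle C2 := (hf2'.1 i2').2
  have hC1le : C1 ≤ s(u1, v1) ::ₘ G1 := (hf1'.1 i1').1
  have hC2le : C2 ≤ s(u2, v2) ::ₘ G2 := (hf2'.1 i2').1
  -- supports of C1, C2
  have hsC1 : MG.support C1 ⊆ MG.support G1 := by
    rintro x ⟨e, he, hxe⟩
    have hmem := Multiset.mem_of_le hC1le he
    rw [Multiset.mem_cons] at hmem
    rcases hmem with rfl | hmem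
    · rcases Sym2.mem_iff.1 hxe with rfl | rfl
      · exact hu1
      · exact hv1
    · exact ⟨e, hmem, hxe⟩
  have hsC2 : MG.support C2 ⊆ MG.support G2 := by
    rintro x ⟨e, he, hxe⟩
    have hmem := Multiset.mem_of_le hC2le he
    rw [Multiset.mem_cons] at hmem
    rcases hmem with rfl | hmem
    · rcases Sym2.mem_iff.1 hxe with rfl | rfl
      · exact hu2
      · exact hv2
    · exact ⟨e, hmem, hxe⟩
  -- the families of untouched cycles
  set A : Fin n1 → Multiset (Sym2 V) := fun j => f1' (i1'.succAbove j) with hAdef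
  set B : Fin n2 → Multiset (Sym2 V) := fun j => f2' (i2'.succAbove j) with hBdef
  have hApack : MG.IsCyclePackingOn (s(u1, v1) ::ₘ G1) A :=
    MG.packing_comp hf1' (Fin.succAbove_right_injective)
  have hBpack : MG.IsCyclePackingOn (s(u2, v2) ::ₘ G2) B :=
    MG.packing_comp hf2' (Fin.succAbove_right_injective)
  have hAC1 : ∀ j, Disjoint (MG.support (A j)) (MG.support C1) := fun j =>
    hf1'.2 _ i1' (Fin.succAbove_ne i1' j)
  have hBC2 : ∀ j, Disjoint (MG.support (B j)) (MG.support C2) := fun j =>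
    hf2'.2 _ i2' (Fin.succAbove_ne i2' j)
  have hAG1 : ∀ j, A j ≤ G1 := by
    intro j
    refine MG.le_of_le_cons_of_not_mem (hApack.1 j).1 fun hmem => ?_
    have h1 : u1 ∈ MG.support (A j) := MG.mem_support_of_mem hmem (by simp)
    have h2 : u1 ∈ MG.support C1 := MG.mem_support_of_mem he1' (by simp)
    exact Set.disjoint_left.1 (hAC1 j) h1 h2
  have hBG2 : ∀ j, B j ≤ G2 := by
    intro j
    refine MG.le_of_le_cons_of_not_mem (hBpack.1 j).1 fun hmem => ?_
    have h1 : u2 ∈ MG.support (B j) := MG.mem_support_of_mem hmem (by simp)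
    have h2 : u2 ∈ MG.support C2 := MG.mem_support_of_mem he2' (by simp)
    exact Set.disjoint_left.1 (hBC2 j) h1 h2
  have hG1G : G1 ≤ G := by
    rw [hG]
    exact le_trans (Multiset.le_add_right _ _)
      (le_trans (Multiset.le_cons_self _ _) (Multiset.le_cons_self _ _))
  have hG2G : G2 ≤ G := by
    rw [hG]
    exact le_trans (Multiset.le_add_left _ _)
      (le_trans (Multiset.le_cons_self _ _) (Multiset.le_cons_self _ _))
  -- the combined cycle
  set D : Multiset (Sym2 V) :=
    s(u1, u2) ::ₘ s(v1, v2) ::ₘ (C1.erase s(u1, v1) + C2.erase s(u2, v2)) with hDdef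
  have hdisjC : Disjoint (MG.support C1) (MG.support C2) := hdisj.mono hsC1 hsC2
  have hDcyc : MG.IsCycle D := MG.combine_cycle hC1cyc hC2cyc he1' he2' hdisjC
  have hP1G1 : C1.erase s(u1, v1) ≤ G1 := by
    have := Multiset.erase_le_erase s(u1, v1) hC1le
    rwa [Multiset.erase_cons_head] at this
  have hP2G2 : C2.erase s(u2, v2) ≤ G2 := by
    have := Multiset.erase_le_erase s(u2, v2) hC2le
    rwa [Multiset.erase_cons_head] at this
  have hDle : D ≤ G := by
    rw [hG, hDdef]
    exact Multiset.cons_le_cons _ (Multiset.cons_le_cons _ (add_le_add hP1G1 hP2G2))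
  have hsuppD : MG.support D ⊆ MG.support C1 ∪ MG.support C2 := MG.combine_supp he1' he2'
  -- assemble the packing on G
  have hA' : MG.IsCyclePackingOn G A :=
    ⟨fun j => ⟨le_trans (hAG1 j) hG1G, (hApack.1 j).2⟩, hApack.2⟩
  have hB' : MG.IsCyclePackingOn G B :=
    ⟨fun j => ⟨le_trans (hBG2 j) hG2G, (hBpack.1 j).2⟩, hBpack.2⟩
  have hAB : ∀ i j, Disjoint (MG.support (A i)) (MG.support (B j)) := fun i j =>
    hdisj.mono (MG.support_mono (hAG1 i)) (MG.support_mono (hBG2 j))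
  have hABpack : MG.IsCyclePackingOn G (Fin.append A B) := MG.packing_append hA' hB' hAB
  have hDpack : MG.IsCyclePackingOn G (fun _ : Fin 1 => D) := MG.packing_single hDle hDcyc
  have hADdisj : ∀ i (j : Fin 1),
      Disjoint (MG.support (Fin.append A B i)) (MG.support ((fun _ : Fin 1 => D) j)) := by
    intro i j
    refine Set.disjoint_right.2 fun x hx hx' => ?_
    have hx2 := hsuppD hx
    induction i using Fin.addCases with
    | left i =>
      rw [Fin.append_left] at hx'
      rcases hx2 with h | h
      · exact Set.disjoint_left.1 (hAC1 i) hx' h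
      · exact Set.disjoint_left.1
          (hdisj.mono (MG.support_mono (hAG1 i)) hsC2) hx' h
    | right i =>
      rw [Fin.append_right] at hx'
      rcases hx2 with h | h
      · exact Set.disjoint_left.1
          ((hdisj.mono hsC1 (MG.support_mono (hBG2 i))).symm) hx' h
      · exact Set.disjoint_left.1 (hBC2 i) hx' h
  have hg : MG.IsCyclePackingOn G (Fin.append (Fin.append A B) (fun _ : Fin 1 => D)) :=
    MG.packing_append hABpack hDpack hADdisj
  exact MG.le_cp _ hg
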